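/- arXiv:1412.1613 — 2 statements merged into one kernel-verified Lean document; each statement's English description precedes it below -/
import Mathlib

section
/- Define q₀ as above. Then for every k, l ∈ {1,...,n}, the double sum of q₀(A,B) over all subsets A of [n] with |A| = k and all subsets B of [n] with |B| = l equals 1. -/
open Finset Nat

/-- The "top set" of size `k` of a permutation `σ` of `Fin n`:
the image under `σ` of the last `k` positions `{n-k,...,n-1}`. -/
def topSet {n : ℕ} (σ : Equiv.Perm (Fin n)) (k : ℕ) : Finset (Fin n) :=
  (Finset.univ.filter fun i : Fin n => n - k ≤ (i : ℕ)).image σ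

/-- The bivariate relative quality function in the i.i.d. case. -/
def q0 (n : ℕ) (A B : Finset (Fin n)) : ℚ :=
  if B ⊆ A then
    ((n - A.card)! * (A.card - B.card)! * (B.card)! : ℕ) / (n ! : ℚ)
  else if A ⊆ B then
    ((n - B.card)! * (B.card - A.card)! * (A.card)! : ℕ) / (n ! : ℚ)
  else 0

lemma q0_symm (n : ℕ) (A B : Finset (Fin n)) : q0 n A B = q0 n B A := by
  by_cases h1 : B ⊆ A
  · by_cases h2 : A ⊆ B
    · have hAB := Finset.Subset.antisymm h2 h1
      subst hAB; rfl
    · simp [q0, h1, h2]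
  · by_cases h2 : A ⊆ B
    · simp [q0, h1, h2]
    · simp [q0, h1, h2]

lemma main_le (n k l : ℕ) (hlk : l ≤ k) (hkn : k ≤ n) :
    ∑ A ∈ Finset.univ.filter (fun A : Finset (Fin n) => A.card = k),
      ∑ B ∈ Finset.univ.filter (fun B : Finset (Fin n) => B.card = l), q0 n A B = 1 := by
  set c : ℚ := (((n - k)! * (k - l)! * l ! : ℕ) : ℚ) / (n ! : ℚ) with hc
  have hinner : ∀ A ∈ Finset.univ.filter (fun A : Finset (Fin n) => A.card = k),
      ∑ B ∈ Finset.univ.filter (fun B : Finset (Fin n) => B.card = l), q0 n A B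
        = (k.choose l : ℚ) * c := by
    intro A hA
    simp only [Finset.mem_filter] at hA
    have h1 : ∀ B ∈ Finset.univ.filter (fun B : Finset (Fin n) => B.card = l),
        q0 n A B = if B ⊆ A then c else 0 := by
      intro B hB
      simp only [Finset.mem_filter] at hB
      by_cases hBA : B ⊆ A
      · simp [q0, hBA, hA.2, hB.2, hc]
      · have hAB : ¬ A ⊆ B := by
          intro h
          have : A = B := Finset.eq_of_subset_of_card_le h (by omega)
          exact hBA (this ▸ Finset.Subset.refl A)
        simp [q0, hBA, hAB]
    rw [Finset.sum_congr rfl h1, ← Finset.sum_filter]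
    have hset : (Finset.univ.filter (fun B : Finset (Fin n) => B.card = l)).filter
        (fun B => B ⊆ A) = A.powersetCard l := by
      ext B
      simp [Finset.mem_powersetCard, and_comm]
    rw [hset, Finset.sum_const, Finset.card_powersetCard, hA.2, nsmul_eq_mul]
  rw [Finset.sum_congr rfl hinner, Finset.sum_const, nsmul_eq_mul]
  have hcard : (Finset.univ.filter (fun A : Finset (Fin n) => A.card = k)).card
      = n.choose k := by
    have hset : (Finset.univ.filter (fun A : Finset (Fin n) => A.card = k))
        = (Finset.univ : Finset (Fin n)).powersetCard k := by
      ext A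
      simp [Finset.mem_powersetCard]
    rw [hset, Finset.card_powersetCard, Finset.card_univ, Fintype.card_fin]
  rw [hcard, hc]
  have key : n.choose k * (k.choose l * ((n - k)! * (k - l)! * l !)) = n ! := by
    have h2 := Nat.choose_mul_factorial_mul_factorial hlk
    have h3 := Nat.choose_mul_factorial_mul_factorial hkn
    calc n.choose k * (k.choose l * ((n - k)! * (k - l)! * l !))
        = n.choose k * (k.choose l * l ! * (k - l)!) * (n - k)! := by ring
      _ = n.choose k * k ! * (n - k)! := by rw [h2]
      _ = n ! := h3
  have hn : (n ! : ℚ) ≠ 0 := by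
    exact_mod_cast Nat.factorial_ne_zero n
  field_simp
  push_cast
  exact_mod_cast congrArg (fun m : ℕ => (m : ℚ)) (by rw [← key]; ring : n.choose k * k.choose l * ((n - k)! * (k - l)! * l !) = n !)

theorem stmt_3 (n : ℕ) (k l : ℕ) (hk1 : 1 ≤ k) (hkn : k ≤ n) (hl1 : 1 ≤ l) (hln : l ≤ n) :
    ∑ A ∈ Finset.univ.filter (fun A : Finset (Fin n) => A.card = k),
      ∑ B ∈ Finset.univ.filter (fun B : Finset (Fin n) => B.card = l), q0 n A B = 1 := by
  rcases le_or_gt l k with h | h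
  · exact main_le n k l h hkn
  · rw [Finset.sum_comm]
    have := main_le n l k h.le hln
    calc ∑ B ∈ Finset.univ.filter (fun B : Finset (Fin n) => B.card = l),
          ∑ A ∈ Finset.univ.filter (fun A : Finset (Fin n) => A.card = k), q0 n A B
        = ∑ B ∈ Finset.univ.filter (fun B : Finset (Fin n) => B.card = l),
          ∑ A ∈ Finset.univ.filter (fun A : Finset (Fin n) => A.card = k), q0 n B A := by
          exact Finset.sum_congr rfl fun B _ => Finset.sum_congr rfl fun A _ => q0_symm n A B
      _ = 1 := this
end

section
/- With φ₁, φ₂, q₀, S̄, and s_{k,l} as above, for every k ∈ [n] one has Σ_{l=1}^n s_{k,l} = s_k, where s_k = Σ_{|A|=n-k+1} φ₁(A)/C(n,n-k+1) - Σ_{|A|=n-k} φ₁(A)/C(n,n-k) is Boland's formula for the structure signature of the first system. -/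
open Finset Nat

/-- Tail bivariate structure signature of the pair of structures `φ1, φ2`. -/
def Sbar (n : ℕ) (φ1 φ2 : Finset (Fin n) → ℚ) (k l : ℕ) : ℚ :=
  ∑ A ∈ Finset.univ.filter (fun A : Finset (Fin n) => A.card = n - k),
    ∑ B ∈ Finset.univ.filter (fun B : Finset (Fin n) => B.card = n - l),
      q0 n A B * φ1 A * φ2 B

lemma q0_univ {n : ℕ} (A : Finset (Fin n)) :
    q0 n A Finset.univ = 1 / (n.choose A.card : ℚ) := by
  have hA : A.card ≤ n := by
    simpa using Finset.card_le_card (Finset.subset_univ A)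
  have hfac : (n.choose A.card : ℚ) * A.card ! * (n - A.card)! = n ! := by
    exact_mod_cast congrArg (Nat.cast : ℕ → ℚ)
      (Nat.choose_mul_factorial_mul_factorial hA)
  have hch : (n.choose A.card : ℚ) ≠ 0 := by
    exact_mod_cast (Nat.choose_pos hA).ne'
  have hnf : (n ! : ℚ) ≠ 0 := by exact_mod_cast (Nat.factorial_pos n).ne'
  unfold q0
  by_cases h : (Finset.univ : Finset (Fin n)) ⊆ A
  · have hA' : A = Finset.univ := Finset.univ_subset_iff.mp h
    subst hA'
    simp [Finset.card_univ, Nat.sub_self]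
    exact Nat.factorial_ne_zero n
  · rw [if_neg h, if_pos (Finset.subset_univ A)]
    simp only [Finset.card_univ, Fintype.card_fin, Nat.sub_self, Nat.factorial_zero]
    push_cast
    field_simp
    linarith [hfac]

lemma Sbar_l_zero {n : ℕ} (φ1 φ2 : Finset (Fin n) → ℚ) (u2 : φ2 Finset.univ = 1) (m : ℕ) :
    Sbar n φ1 φ2 m 0
      = ∑ A ∈ Finset.univ.filter (fun A : Finset (Fin n) => A.card = n - m),
          φ1 A / (n.choose (n - m) : ℚ) := by
  unfold Sbar
  apply Finset.sum_congr rfl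
  intro A hA
  have hAc : A.card = n - m := (Finset.mem_filter.mp hA).2
  have hB : Finset.univ.filter (fun B : Finset (Fin n) => B.card = n - 0)
      = {(Finset.univ : Finset (Fin n))} := by
    ext B
    simp only [Finset.mem_filter, Finset.mem_univ, true_and, Nat.sub_zero,
      Finset.mem_singleton]
    constructor
    · intro h; exact Finset.eq_univ_of_card B (by simpa using h)
    · rintro rfl; simp
  rw [hB, Finset.sum_singleton, q0_univ, u2, hAc]
  ring

lemma Sbar_l_n {n : ℕ} (φ1 φ2 : Finset (Fin n) → ℚ) (e2 : φ2 ∅ = 0) (m : ℕ) :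
    Sbar n φ1 φ2 m n = 0 := by
  unfold Sbar
  apply Finset.sum_eq_zero
  intro A _
  apply Finset.sum_eq_zero
  intro B hB
  have : B.card = 0 := by simpa using (Finset.mem_filter.mp hB).2
  have : B = ∅ := Finset.card_eq_zero.mp this
  subst this
  rw [e2]; ring

theorem stmt_16 (n : ℕ) (hn : 1 ≤ n) (φ1 φ2 : Finset (Fin n) → ℚ)
    (h1 : ∀ A, φ1 A = 0 ∨ φ1 A = 1) (h2 : ∀ A, φ2 A = 0 ∨ φ2 A = 1)
    (m1 : ∀ A B, A ⊆ B → φ1 A ≤ φ1 B) (m2 : ∀ A B, A ⊆ B → φ2 A ≤ φ2 B)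
    (e1 : φ1 ∅ = 0) (e2 : φ2 ∅ = 0)
    (u1 : φ1 Finset.univ = 1) (u2 : φ2 Finset.univ = 1)
    (s : ℕ → ℕ → ℚ)
    (hs : ∀ k l, 1 ≤ k → k ≤ n → 1 ≤ l → l ≤ n →
      s k l = Sbar n φ1 φ2 (k - 1) (l - 1) - Sbar n φ1 φ2 k (l - 1)
                - Sbar n φ1 φ2 (k - 1) l + Sbar n φ1 φ2 k l)
    (k : ℕ) (hk1 : 1 ≤ k) (hkn : k ≤ n) :
    ∑ l ∈ Finset.Icc 1 n, s k l
      = (∑ A ∈ Finset.univ.filter (fun A : Finset (Fin n) => A.card = n - k + 1), φ1 A)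
          / (n.choose (n - k + 1) : ℚ)
        - (∑ A ∈ Finset.univ.filter (fun A : Finset (Fin n) => A.card = n - k), φ1 A)
            / (n.choose (n - k) : ℚ) := by
  set f : ℕ → ℚ := fun l => Sbar n φ1 φ2 (k-1) l - Sbar n φ1 φ2 k l with hf
  have hsum : ∑ l ∈ Finset.Icc 1 n, s k l = ∑ l ∈ Finset.Icc 1 n, (f (l-1) - f l) := by
    apply Finset.sum_congr rfl
    intro l hl
    obtain ⟨hl1, hln⟩ := Finset.mem_Icc.mp hl
    rw [hs k l hk1 hkn hl1 hln]
    simp only [hf]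
    ring
  rw [hsum]
  have htel : ∑ l ∈ Finset.Icc 1 n, (f (l-1) - f l) = f 0 - f n := by
    rw [show Finset.Icc 1 n = Finset.Ico 1 (n+1) from rfl, Finset.sum_Ico_eq_sum_range]
    have hrw : ∀ i ∈ Finset.range (n + 1 - 1), f (1 + i - 1) - f (1 + i) = f i - f (i+1) := by
      intro i _
      congr 1 <;> [skip; skip] <;> congr 1 <;> omega
    rw [Finset.sum_congr rfl hrw, show n + 1 - 1 = n from rfl]
    exact Finset.sum_range_sub' f n
  rw [htel]
  have hkm : n - (k - 1) = n - k + 1 := by omega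
  simp only [hf, Sbar_l_n φ1 φ2 e2, Sbar_l_zero φ1 φ2 u2, hkm, Finset.sum_div]
  ring
end
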